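/- Fix an integer k ≠ 0. Suppose F₀ : ℝ/2πℤ → ℂ with S := 2π ∫|F₀|² > 0, and suppose that for all t ≥ 0 the function F(·,t) = e^{ikΦ(·,t)} F₀ satisfies ‖∂_y F(·,t)‖_{L¹} ≤ A + Bt for constants A, B ≥ 0. Then for all t ≥ 0, ∑_{m ∈ ℤ} |F̂(m,t)|² / (k² + m²) ≥ c²/(1+t⁴), where c² = S / (2(k² + 2D²)) and D = 1 + 8(A² + B²)/S, and F̂(m,t) = ∫_{-π}^{π} F(y,t) e^{imy} dy denotes the Fourier coefficients (with Parseval normalization ∑_m |F̂(m,t)|² = 2π∫|F(·,t)|² = S). -/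

import Mathlib

lemma nat_finset_inv_sq_le (M : ℕ) (hM : M ≠ 0) (v : Finset ℕ)
    (hv : ∀ i ∈ v, M < i) : ∑ i ∈ v, ((i:ℝ)^2)⁻¹ ≤ (M:ℝ)⁻¹ := by
  set N := max M (v.sup id) with hN
  have hsub : v ⊆ Finset.Ioc M N := by
    intro i hi
    exact Finset.mem_Ioc.2 ⟨hv i hi, le_max_of_le_right (Finset.le_sup (f := id) hi)⟩
  calc ∑ i ∈ v, ((i:ℝ)^2)⁻¹
      ≤ ∑ i ∈ Finset.Ioc M N, ((i:ℝ)^2)⁻¹ :=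
        Finset.sum_le_sum_of_subset_of_nonneg hsub (by intros; positivity)
    _ ≤ (M:ℝ)⁻¹ - (N:ℝ)⁻¹ := sum_Ioc_inv_sq_le_sub hM (le_max_left _ _)
    _ ≤ (M:ℝ)⁻¹ := by
        have : (0:ℝ) ≤ (N:ℝ)⁻¹ := by positivity
        linarith

lemma int_tail_bound (M : ℕ) (hM : 1 ≤ M) (K : ℝ) (hK : 0 ≤ K) (f : ℤ → ℝ)
    (hnn : ∀ m, 0 ≤ f m)
    (hbd : ∀ m : ℤ, m ≠ 0 → f m ≤ K / (m:ℝ)^2) (hsum : Summable f) :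
    ∑' x : (((Finset.Icc (-(M:ℤ)) (M:ℤ) : Finset ℤ) : Set ℤ)ᶜ : Set ℤ), f ↑x ≤ 2 * K / M := by
  apply Summable.tsum_le_of_sum_le (hsum.subtype _)
  intro t
  set u : Finset ℤ := t.image Subtype.val with hu
  have hmem : ∀ n ∈ u, M < n.natAbs := by
    intro n hn
    rw [hu, Finset.mem_image] at hn
    obtain ⟨x, _, rfl⟩ := hn
    have hx := x.2
    simp only [Set.mem_compl_iff, Finset.coe_Icc, Set.mem_Icc, not_and_or, not_le] at hx
    omega
  have habs : ∀ n : ℤ, ((n:ℝ)^2)⁻¹ = ((n.natAbs:ℝ)^2)⁻¹ := by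
    intro n; rw [Nat.cast_natAbs, Int.cast_abs, sq_abs]
  have step0 : ∑ x ∈ t, f ↑x = ∑ n ∈ u, f n := by
    rw [hu, Finset.sum_image (fun a _ b _ h => Subtype.val_injective h)]
  have step1 : ∑ n ∈ u, f n ≤ ∑ n ∈ u, K * ((n:ℝ)^2)⁻¹ := by
    apply Finset.sum_le_sum
    intro n hn
    have hn0 : n ≠ 0 := by have := hmem n hn; omega
    refine (hbd n hn0).trans_eq ?_
    rw [div_eq_mul_inv]
  have hhalf : ∀ (P : ℤ → Prop) [DecidablePred P],
      (∀ a ∈ u.filter P, ∀ b ∈ u.filter P, a.natAbs = b.natAbs → a = b) →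
      ∑ n ∈ u.filter P, ((n:ℝ)^2)⁻¹ ≤ (M:ℝ)⁻¹ := by
    intro P _ hinj
    calc ∑ n ∈ u.filter P, ((n:ℝ)^2)⁻¹
        = ∑ n ∈ u.filter P, ((n.natAbs:ℝ)^2)⁻¹ := Finset.sum_congr rfl fun n _ => habs n
      _ = ∑ i ∈ (u.filter P).image Int.natAbs, ((i:ℝ)^2)⁻¹ :=
          (Finset.sum_image (s := u.filter P) (g := Int.natAbs) (f := fun i : ℕ => ((i:ℝ)^2)⁻¹) hinj).symm
      _ ≤ (M:ℝ)⁻¹ := by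
          apply nat_finset_inv_sq_le M (by omega)
          intro i hi
          rw [Finset.mem_image] at hi
          obtain ⟨n, hn, rfl⟩ := hi
          exact hmem n (Finset.mem_filter.1 hn).1
  have step2 : ∑ n ∈ u, ((n:ℝ)^2)⁻¹ ≤ 2 / M := by
    rw [← Finset.sum_filter_add_sum_filter_not u (fun n => 0 < n)]
    have h1 := hhalf (fun n => 0 < n) (by
      intro a ha b hb h
      have ha' := (Finset.mem_filter.1 ha).2
      have hb' := (Finset.mem_filter.1 hb).2
      omega)
    have h2 := hhalf (fun n => ¬ 0 < n) (by
      intro a ha b hb h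
      have ha' := (Finset.mem_filter.1 ha).2
      have hb' := (Finset.mem_filter.1 hb).2
      simp only [not_lt] at ha' hb'
      omega)
    have hM' : (0:ℝ) < M := by positivity
    calc ∑ n ∈ u.filter (fun n => 0 < n), ((n:ℝ)^2)⁻¹
          + ∑ n ∈ u.filter (fun n => ¬ 0 < n), ((n:ℝ)^2)⁻¹
        ≤ (M:ℝ)⁻¹ + (M:ℝ)⁻¹ := add_le_add h1 h2
      _ = 2 / M := by rw [div_eq_mul_inv, two_mul]
  calc ∑ x ∈ t, f ↑x = ∑ n ∈ u, f n := step0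
    _ ≤ ∑ n ∈ u, K * ((n:ℝ)^2)⁻¹ := step1
    _ = K * ∑ n ∈ u, ((n:ℝ)^2)⁻¹ := by rw [Finset.mul_sum]
    _ ≤ K * (2 / M) := by gcongr
    _ = 2 * K / M := by ring


open MeasureTheory intervalIntegral Set in
lemma fourier_parts_bound (f g : ℝ → ℂ) (m : ℤ) (hm : m ≠ 0)
    (hgint : ∀ a b : ℝ, IntervalIntegrable g volume a b)
    (hftc : ∀ a b : ℝ, f b - f a = ∫ y in a..b, g y)
    (hfper : f Real.pi = f (-Real.pi)) :
    ‖∫ y in (-Real.pi)..Real.pi, f y * Complex.exp (Complex.I * m * y)‖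
      ≤ (∫ y in (-Real.pi)..Real.pi, ‖g y‖) / |(m : ℝ)| := by
  have hπ : (-Real.pi) ≤ Real.pi := by linarith [Real.pi_pos]
  set c : ℂ := Complex.I * m with hcdef
  have hc : c ≠ 0 := mul_ne_zero Complex.I_ne_zero (by exact_mod_cast hm)
  have hEcont : Continuous (fun y : ℝ => Complex.exp (c * y)) :=
    Complex.continuous_exp.comp (continuous_const.mul Complex.continuous_ofReal)
  have hEnorm : ∀ s : ℝ, ‖Complex.exp (c * s)‖ = 1 := by
    intro s
    simp [Complex.norm_exp, hcdef, Complex.mul_re, Complex.mul_im]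
  have hEper : Complex.exp (c * (Real.pi : ℝ)) = Complex.exp (c * ((-Real.pi : ℝ) : ℂ)) := by
    have h : c * ((Real.pi : ℝ) : ℂ) = c * ((-Real.pi : ℝ) : ℂ) + m * (2 * Real.pi * Complex.I) := by
      push_cast [hcdef]; ring
    rw [h, Complex.exp_add, Complex.exp_int_mul_two_pi_mul_I, mul_one]
  have hEint : ∫ y in (-Real.pi)..Real.pi, Complex.exp (c * y) = 0 := by
    rw [integral_exp_mul_complex hc, hEper, sub_self, zero_div]
  have hgzero : (∫ y in (-Real.pi)..Real.pi, g y) = 0 := by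
    rw [← hftc, hfper, sub_self]
  set G : ℝ → ℂ := fun y => ∫ s in (-Real.pi)..y, g s with hGdef
  have hGcont : Continuous G := intervalIntegral.continuous_primitive hgint _
  set μ := volume.restrict (Set.Ioc (-Real.pi) Real.pi) with hμdef
  have hg1 : Integrable g μ := (hgint (-Real.pi) Real.pi).1
  have hE1 : Integrable (fun y : ℝ => Complex.exp (c * y)) μ := hEcont.integrableOn_Ioc
  set T : Set (ℝ × ℝ) := {p : ℝ × ℝ | p.1 ≤ p.2} with hTdef
  have hT : MeasurableSet T := measurableSet_le measurable_fst measurable_snd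
  set H : ℝ × ℝ → ℂ := T.indicator (fun p => g p.1 * Complex.exp (c * p.2)) with hHdef
  have hHint : Integrable H (μ.prod μ) := (hg1.mul_prod hE1).indicator hT
  -- step 1
  have step1 : ∫ y in (-Real.pi)..Real.pi, G y * Complex.exp (c * y)
      = ∫ y, (∫ s, H (s, y) ∂μ) ∂μ := by
    rw [integral_of_le hπ]
    apply setIntegral_congr_fun measurableSet_Ioc
    intro y hy
    have h1 : ∀ s, H (s, y) = (Set.indicator (Set.Iic y) g s) * Complex.exp (c * y) := by
      intro s
      by_cases h : s ≤ y
      · rw [hHdef, Set.indicator_of_mem (by exact h : (s,y) ∈ T),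
          Set.indicator_of_mem (by exact h)]
      · rw [hHdef, Set.indicator_of_notMem (by exact h : (s,y) ∉ T),
          Set.indicator_of_notMem (by exact h), zero_mul]
    simp only [h1]
    rw [MeasureTheory.integral_mul_const, MeasureTheory.integral_indicator measurableSet_Iic,
      hμdef, Measure.restrict_restrict measurableSet_Iic]
    have h2 : Set.Iic y ∩ Set.Ioc (-Real.pi) Real.pi = Set.Ioc (-Real.pi) y := by
      ext s
      simp only [Set.mem_inter_iff, Set.mem_Iic, Set.mem_Ioc]
      constructor
      · rintro ⟨h1', h2', _⟩; exact ⟨h2', h1'⟩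
      · rintro ⟨h1', h2'⟩; exact ⟨h2', h1', h2'.trans hy.2⟩
    rw [h2]
    congr 1
    rw [hGdef]
    exact integral_of_le hy.1.le
  -- step 2
  have step2 : ∫ y, (∫ s, H (s, y) ∂μ) ∂μ = ∫ s, (∫ y, H (s, y) ∂μ) ∂μ :=
    MeasureTheory.integral_integral_swap (f := fun y s => H (s, y)) (μ := μ) (ν := μ)
      hHint.swap
  -- step 3
  have step3 : ∫ s, (∫ y, H (s, y) ∂μ) ∂μ
      = ∫ s in (-Real.pi)..Real.pi,
          g s * ((Complex.exp (c * (Real.pi:ℝ)) - Complex.exp (c * s)) / c) := by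
    rw [integral_of_le hπ]
    symm
    apply setIntegral_congr_fun measurableSet_Ioc
    intro s hs
    have h1 : ∀ y, H (s, y)
        = Set.indicator (Set.Ici s) (fun y : ℝ => g s * Complex.exp (c * y)) y := by
      intro y
      by_cases h : s ≤ y
      · rw [hHdef, Set.indicator_of_mem (by exact h : (s,y) ∈ T),
          Set.indicator_of_mem (by exact h)]
      · rw [hHdef, Set.indicator_of_notMem (by exact h : (s,y) ∉ T),
          Set.indicator_of_notMem (by exact h)]
    simp only [h1]
    rw [MeasureTheory.integral_indicator measurableSet_Ici,
      hμdef, Measure.restrict_restrict measurableSet_Ici]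
    have h2 : Set.Ici s ∩ Set.Ioc (-Real.pi) Real.pi = Set.Icc s Real.pi := by
      ext y
      simp only [Set.mem_inter_iff, Set.mem_Ici, Set.mem_Ioc, Set.mem_Icc]
      constructor
      · rintro ⟨h1', _, h3'⟩; exact ⟨h1', h3'⟩
      · rintro ⟨h1', h2'⟩; exact ⟨h1', hs.1.trans_le h1', h2'⟩
    rw [h2, integral_Icc_eq_integral_Ioc, ← integral_of_le hs.2,
      intervalIntegral.integral_const_mul, integral_exp_mul_complex hc]
  -- key identity
  have hfEint : ∫ y in (-Real.pi)..Real.pi, f y * Complex.exp (c * y)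
      = -(1/c) * ∫ s in (-Real.pi)..Real.pi, g s * Complex.exp (c * s) := by
    have hfeq : ∀ y : ℝ, f y = f (-Real.pi) + G y := by
      intro y; rw [hGdef]; simp only [← hftc (-Real.pi) y]; ring
    have hint1 : IntervalIntegrable (fun y : ℝ => f (-Real.pi) * Complex.exp (c * y))
        volume (-Real.pi) Real.pi := (continuous_const.mul hEcont).intervalIntegrable _ _
    have hint2 : IntervalIntegrable (fun y : ℝ => G y * Complex.exp (c * y))
        volume (-Real.pi) Real.pi := (hGcont.mul hEcont).intervalIntegrable _ _
    have hint3 : IntervalIntegrable (fun s : ℝ =>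
        (Complex.exp (c * (Real.pi:ℝ)) / c) * g s) volume (-Real.pi) Real.pi :=
      (hgint _ _).const_mul _
    have hint4 : IntervalIntegrable (fun s : ℝ =>
        (1/c) * (g s * Complex.exp (c * s))) volume (-Real.pi) Real.pi :=
      (((hgint _ _).mul_continuousOn hEcont.continuousOn)).const_mul _
    calc ∫ y in (-Real.pi)..Real.pi, f y * Complex.exp (c * y)
        = ∫ y in (-Real.pi)..Real.pi,
            (f (-Real.pi) * Complex.exp (c * y) + G y * Complex.exp (c * y)) := by
          apply intervalIntegral.integral_congr
          intro y _
          show f y * Complex.exp (c * y) = _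
          rw [hfeq y]; ring
      _ = (∫ y in (-Real.pi)..Real.pi, f (-Real.pi) * Complex.exp (c * y))
            + ∫ y in (-Real.pi)..Real.pi, G y * Complex.exp (c * y) :=
          integral_add hint1 hint2
      _ = ∫ y in (-Real.pi)..Real.pi, G y * Complex.exp (c * y) := by
          rw [intervalIntegral.integral_const_mul, hEint, mul_zero, zero_add]
      _ = ∫ s in (-Real.pi)..Real.pi,
            g s * ((Complex.exp (c * (Real.pi:ℝ)) - Complex.exp (c * s)) / c) := by
          rw [step1, step2, step3]
      _ = ∫ s in (-Real.pi)..Real.pi,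
            ((Complex.exp (c * (Real.pi:ℝ)) / c) * g s
              - (1/c) * (g s * Complex.exp (c * s))) := by
          apply intervalIntegral.integral_congr
          intro s _
          show g s * _ = _
          field_simp
      _ = (Complex.exp (c * (Real.pi:ℝ)) / c) * (∫ s in (-Real.pi)..Real.pi, g s)
            - (1/c) * ∫ s in (-Real.pi)..Real.pi, g s * Complex.exp (c * s) := by
          rw [integral_sub hint3 hint4, intervalIntegral.integral_const_mul, intervalIntegral.integral_const_mul]
      _ = -(1/c) * ∫ s in (-Real.pi)..Real.pi, g s * Complex.exp (c * s) := by
          rw [hgzero, mul_zero, zero_sub, neg_mul]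
  -- final estimate
  have hnormc : ‖c‖ = |(m:ℝ)| := by
    rw [hcdef, norm_mul, Complex.norm_I, one_mul]
    exact Complex.norm_intCast m
  have hmabs : (0:ℝ) < |(m:ℝ)| := by
    simp only [abs_pos]
    exact_mod_cast hm
  have key : ‖∫ y in (-Real.pi)..Real.pi, f y * Complex.exp (c * y)‖
      = (1 / |(m:ℝ)|) * ‖∫ s in (-Real.pi)..Real.pi, g s * Complex.exp (c * s)‖ := by
    rw [hfEint, norm_mul, norm_neg, norm_div, norm_one, hnormc]
  have hle : ‖∫ s in (-Real.pi)..Real.pi, g s * Complex.exp (c * s)‖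
      ≤ ∫ y in (-Real.pi)..Real.pi, ‖g y‖ := by
    refine (intervalIntegral.norm_integral_le_integral_norm hπ).trans_eq ?_
    apply intervalIntegral.integral_congr
    intro y _
    show ‖g y * Complex.exp (c * y)‖ = ‖g y‖
    rw [norm_mul, hEnorm, mul_one]
  calc ‖∫ y in (-Real.pi)..Real.pi, f y * Complex.exp (c * y)‖
      = (1 / |(m:ℝ)|) * ‖∫ s in (-Real.pi)..Real.pi, g s * Complex.exp (c * s)‖ := key
    _ ≤ (1 / |(m:ℝ)|) * ∫ y in (-Real.pi)..Real.pi, ‖g y‖ := by gcongr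
    _ = (∫ y in (-Real.pi)..Real.pi, ‖g y‖) / |(m:ℝ)| := by rw [one_div, inv_mul_eq_div]

set_option maxHeartbeats 1000000 in
open MeasureTheory intervalIntegral in
/-- Core inviscid lower bound: a phase-modulated mode `F(·,t) = e^{ikΦ(·,t)} F₀`
of conserved Parseval mass `S` whose `y`-derivative has `L¹` norm growing at
most linearly retains a weighted `H^{-1}` mass of order `1/(1+t⁴)`. -/
theorem inviscid_mode_Hm1_lower_bound
    (k : ℤ) (hk : k ≠ 0) (F₀ : ℝ → ℂ) (Φ : ℝ → ℝ → ℝ)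
    (F Fy : ℝ → ℝ → ℂ) (S A B : ℝ)
    (hF : ∀ t y, F t y = Complex.exp (Complex.I * k * Φ t y) * F₀ y)
    (hS : S = 2 * Real.pi * ∫ y in (-Real.pi)..Real.pi, ‖F₀ y‖^2)
    (hSpos : 0 < S) (hA : 0 ≤ A) (hB : 0 ≤ B)
    (hper : ∀ t, Function.Periodic (F t) (2 * Real.pi))
    (hFyint : ∀ t, 0 ≤ t → ∀ a b : ℝ, IntervalIntegrable (Fy t) volume a b)
    (hftc : ∀ t, 0 ≤ t → ∀ a b : ℝ, F t b - F t a = ∫ y in a..b, Fy t y)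
    (hL1 : ∀ t, 0 ≤ t →
      (∫ y in (-Real.pi)..Real.pi, ‖Fy t y‖) ≤ A + B * t)
    (hParseval : ∀ t, 0 ≤ t →
      HasSum (fun m : ℤ =>
        ‖∫ y in (-Real.pi)..Real.pi, F t y * Complex.exp (Complex.I * m * y)‖^2) S) :
    ∀ t, 0 ≤ t →
      S / (2 * ((k : ℝ)^2 + 2 * (1 + 8 * (A^2 + B^2) / S)^2)) / (1 + t^4)
        ≤ ∑' m : ℤ,
            ‖∫ y in (-Real.pi)..Real.pi, F t y * Complex.exp (Complex.I * m * y)‖^2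
              / ((k : ℝ)^2 + (m : ℝ)^2) := by
  intro t ht
  set L := A + B * t with hLdef
  have hL0 : 0 ≤ L := add_nonneg hA (mul_nonneg hB ht)
  set c : ℤ → ℝ := fun m =>
    ‖∫ y in (-Real.pi)..Real.pi, F t y * Complex.exp (Complex.I * m * y)‖^2 with hcdef
  have hP : HasSum c S := hParseval t ht
  have hcnn : ∀ m, 0 ≤ c m := fun m => by positivity
  -- periodicity at the endpoints
  have hfper : F t Real.pi = F t (-Real.pi) := by
    have h := hper t (-Real.pi)
    rw [show -Real.pi + 2 * Real.pi = Real.pi by ring] at h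
    exact h
  -- decay of Fourier coefficients
  have hdecay : ∀ m : ℤ, m ≠ 0 → c m ≤ L^2 / (m:ℝ)^2 := by
    intro m hm
    have hmabs : (0:ℝ) < |(m:ℝ)| := by
      simp only [abs_pos]
      exact_mod_cast hm
    have hb := fourier_parts_bound (F t) (Fy t) m hm (hFyint t ht) (hftc t ht) hfper
    have h1 : ‖∫ y in (-Real.pi)..Real.pi, F t y * Complex.exp (Complex.I * m * y)‖
        ≤ L / |(m:ℝ)| := by
      refine hb.trans ?_
      gcongr
      exact hL1 t ht
    calc c m ≤ (L / |(m:ℝ)|)^2 := by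
          rw [hcdef]
          exact pow_le_pow_left₀ (norm_nonneg _) h1 2
      _ = L^2 / (m:ℝ)^2 := by rw [div_pow, sq_abs]
  set D := 1 + 8 * (A^2 + B^2) / S with hDdef
  have hD1 : 1 ≤ D := by
    rw [hDdef]
    have : 0 ≤ 8 * (A^2 + B^2) / S := by positivity
    linarith
  obtain ⟨M, hM1, hMge, hMle1⟩ :
      ∃ M : ℕ, 1 ≤ M ∧ 4 * L^2 / S ≤ (M:ℝ) ∧ (M:ℝ) ≤ 4 * L^2 / S + 1 := by
    have hx0 : (0:ℝ) ≤ 4 * L^2 / S := by positivity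
    refine ⟨max 1 ⌈4 * L^2 / S⌉₊, le_max_left _ _, ?_, ?_⟩
    · refine (Nat.le_ceil _).trans ?_
      have h := le_max_right 1 ⌈4 * L^2 / S⌉₊
      exact_mod_cast h
    · push_cast
      apply max_le
      · linarith
      · exact (Nat.ceil_lt_add_one hx0).le
  have hM0 : (0:ℝ) < (M:ℕ) := by
    have h0 : (0:ℕ) < M := hM1
    exact_mod_cast h0
  have hMle : (M:ℝ) ≤ D * (1 + t^2) := by
    refine hMle1.trans ?_
    have key : 4 * L^2 + S ≤ (D * (1 + t^2)) * S := by
      have hDS : D * S = S + 8 * (A^2 + B^2) := by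
        rw [hDdef]; field_simp
      have expand : (D * (1 + t^2)) * S = (1 + t^2) * (D * S) := by ring
      rw [expand, hDS, hLdef]
      nlinarith [sq_nonneg (A - B*t), mul_nonneg hSpos.le (sq_nonneg t),
        mul_nonneg (mul_nonneg (by norm_num : (0:ℝ) ≤ 8) (sq_nonneg A)) (sq_nonneg t),
        sq_nonneg B, sq_nonneg (B*t)]
    have heq : 4 * L^2 / S + 1 = (4 * L^2 + S) / S := by field_simp
    rw [heq, div_le_iff₀ hSpos]
    exact key
  -- split the Parseval sum
  have hsplit := Summable.sum_add_tsum_compl (s := Finset.Icc (-(M:ℤ)) (M:ℤ)) hP.summable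
  rw [hP.tsum_eq] at hsplit
  have htail : ∑' x : (((Finset.Icc (-(M:ℤ)) (M:ℤ) : Finset ℤ) : Set ℤ)ᶜ : Set ℤ), c ↑x
      ≤ 2 * L^2 / M :=
    int_tail_bound M hM1 (L^2) (sq_nonneg L) c hcnn hdecay hP.summable
  have htail2 : 2 * L^2 / M ≤ S / 2 := by
    rw [div_le_div_iff₀ hM0 two_pos]
    have h4 : 4 * L^2 ≤ (M:ℝ) * S := by
      have := (div_le_iff₀ hSpos).mp hMge
      linarith
    nlinarith
  have hfin : S / 2 ≤ ∑ m ∈ Finset.Icc (-(M:ℤ)) (M:ℤ), c m := by linarith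
  -- weighted sum
  have hk1 : (1:ℝ) ≤ (k:ℝ)^2 := by
    have h := Int.one_le_abs (by exact hk)
    have h2 : (1:ℤ) ≤ k^2 := by nlinarith [abs_nonneg k, sq_abs k]
    exact_mod_cast h2
  have hwnn : ∀ m : ℤ, 0 ≤ c m / ((k:ℝ)^2 + (m:ℝ)^2) := by
    intro m
    apply div_nonneg (hcnn m)
    positivity
  have hwsummable : Summable (fun m : ℤ => c m / ((k:ℝ)^2 + (m:ℝ)^2)) := by
    apply Summable.of_nonneg_of_le hwnn (fun m => ?_) hP.summable
    apply div_le_self (hcnn m)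
    nlinarith [sq_nonneg ((m:ℝ))]
  have hdenom : (0:ℝ) < (k:ℝ)^2 + (M:ℝ)^2 := by nlinarith [hk1, sq_nonneg ((M:ℝ))]
  calc S / (2 * ((k : ℝ)^2 + 2 * D^2)) / (1 + t^4)
      ≤ (S / 2) / ((k:ℝ)^2 + (M:ℝ)^2) := by
        rw [div_div, div_div]
        have hMsq1 : (M:ℝ)^2 ≤ (D * (1 + t^2))^2 := pow_le_pow_left₀ hM0.le hMle 2
        have hMsq : (M:ℝ)^2 ≤ 2 * D^2 * (1 + t^4) := by
          nlinarith [sq_nonneg (D * (t^2 - 1))]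
        have hc0 : (0:ℝ) < 2 * ((k:ℝ)^2 + (M:ℝ)^2) := by linarith
        have hcb : 2 * ((k:ℝ)^2 + (M:ℝ)^2) ≤ 2 * ((k:ℝ)^2 + 2 * D^2) * (1 + t^4) := by
          nlinarith [hk1, mul_nonneg (by linarith : (0:ℝ) ≤ (k:ℝ)^2)
            (by positivity : (0:ℝ) ≤ t^4)]
        exact div_le_div_of_nonneg_left hSpos.le hc0 hcb
    _ ≤ (∑ m ∈ Finset.Icc (-(M:ℤ)) (M:ℤ), c m) / ((k:ℝ)^2 + (M:ℝ)^2) := by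
        gcongr
    _ = ∑ m ∈ Finset.Icc (-(M:ℤ)) (M:ℤ), c m / ((k:ℝ)^2 + (M:ℝ)^2) :=
        Finset.sum_div _ _ _
    _ ≤ ∑ m ∈ Finset.Icc (-(M:ℤ)) (M:ℤ), c m / ((k:ℝ)^2 + (m:ℝ)^2) := by
        apply Finset.sum_le_sum
        intro m hm
        have hmM : (m:ℝ)^2 ≤ (M:ℝ)^2 := by
          rw [Finset.mem_Icc] at hm
          have h1 : |(m:ℝ)| ≤ (M:ℝ) := by
            have : |m| ≤ (M:ℤ) := abs_le.2 hm
            calc |(m:ℝ)| = ((|m| : ℤ) : ℝ) := by push_cast; rfl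
              _ ≤ ((M:ℤ):ℝ) := by exact_mod_cast this
              _ = (M:ℝ) := by push_cast; rfl
          nlinarith [abs_nonneg (m:ℝ), sq_abs (m:ℝ)]
        gcongr
    _ ≤ ∑' m : ℤ, c m / ((k:ℝ)^2 + (m:ℝ)^2) :=
        Summable.sum_le_tsum _ (fun m _ => hwnn m) hwsummable
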